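/- Let d ≥ 1 be an integer and let l, m be real numbers with 0 < l < d, 0 < m < d and l + m > d. Then there exists a constant C > 0 such that for every k ∈ ℤ^d, ∑_{k₁ ∈ ℤ^d} ⟨k₁⟩^{−l} ⟨k − k₁⟩^{−m} ≤ C ⟨k⟩^{−(l+m−d)}. -/

import Mathlib

open scoped ENNReal

/-- Squared Euclidean norm on `ℤ^d`. -/
noncomputable def znsq {d : ℕ} (p : Fin d → ℤ) : ℝ := ∑ i, ((p i : ℝ)) ^ 2

namespace JBConv

variable {d : ℕ}

lemma znsq_nonneg (p : Fin d → ℤ) : 0 ≤ znsq p :=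
  Finset.sum_nonneg fun _ _ => sq_nonneg _

/-- The Japanese bracket. -/
noncomputable def rho (p : Fin d → ℤ) : ℝ := Real.sqrt (1 + znsq p)

lemma one_le_rho (p : Fin d → ℤ) : 1 ≤ rho p := by
  have h := znsq_nonneg p
  have : (1:ℝ) = Real.sqrt 1 := by simp
  rw [this, rho]
  exact Real.sqrt_le_sqrt (by linarith)

lemma rho_pos (p : Fin d → ℤ) : 0 < rho p := lt_of_lt_of_le one_pos (one_le_rho p)

lemma rho_nonneg (p : Fin d → ℤ) : 0 ≤ rho p := (rho_pos p).le

lemma rho_sq (p : Fin d → ℤ) : rho p ^ 2 = 1 + znsq p :=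
  Real.sq_sqrt (by linarith [znsq_nonneg p])

lemma rho_triangle (a b : Fin d → ℤ) : rho (a + b) ≤ rho a + rho b := by
  have hA := znsq_nonneg a
  have hB := znsq_nonneg b
  set S : ℝ := ∑ i, ((a i : ℝ) * (b i : ℝ)) with hSdef
  have hS : S ≤ Real.sqrt (znsq a) * Real.sqrt (znsq b) := by
    have h2 : S ^ 2 ≤ znsq a * znsq b := by
      simpa [znsq] using Finset.sum_mul_sq_le_sq_mul_sq Finset.univ
        (fun i => (a i : ℝ)) (fun i => (b i : ℝ))
    calc S ≤ |S| := le_abs_self _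
      _ = Real.sqrt (S ^ 2) := (Real.sqrt_sq_eq_abs _).symm
      _ ≤ Real.sqrt (znsq a * znsq b) := Real.sqrt_le_sqrt h2
      _ = Real.sqrt (znsq a) * Real.sqrt (znsq b) := Real.sqrt_mul hA _
  have hz : znsq (a + b) = znsq a + znsq b + 2 * S := by
    calc znsq (a + b) = ∑ i, ((a i : ℝ) ^ 2 + (b i : ℝ) ^ 2 + 2 * ((a i : ℝ) * b i)) := by
          refine Finset.sum_congr rfl fun i _ => ?_
          simp only [Pi.add_apply, Int.cast_add]
          ring
      _ = znsq a + znsq b + 2 * S := by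
          rw [Finset.sum_add_distrib, Finset.sum_add_distrib, ← Finset.mul_sum]
          rfl
  have hmul : Real.sqrt (znsq a) * Real.sqrt (znsq b) ≤ rho a * rho b := by
    apply mul_le_mul _ _ (Real.sqrt_nonneg _) (rho_nonneg a)
    · exact Real.sqrt_le_sqrt (by linarith)
    · exact Real.sqrt_le_sqrt (by linarith)
  have key : 1 + znsq (a + b) ≤ (rho a + rho b) ^ 2 := by
    have h1 : rho a ^ 2 = 1 + znsq a := rho_sq a
    have h2 : rho b ^ 2 = 1 + znsq b := rho_sq b
    have hexp : (rho a + rho b) ^ 2 = rho a ^ 2 + rho b ^ 2 + 2 * (rho a * rho b) := by ring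
    rw [hexp, h1, h2, hz]
    have := hS.trans hmul
    linarith
  calc rho (a + b) = Real.sqrt (1 + znsq (a + b)) := rfl
    _ ≤ Real.sqrt ((rho a + rho b) ^ 2) := Real.sqrt_le_sqrt key
    _ = |rho a + rho b| := Real.sqrt_sq_eq_abs _
    _ = rho a + rho b := abs_of_nonneg (by linarith [rho_nonneg a, rho_nonneg b])

lemma abs_coord_le (p : Fin d → ℤ) (i : Fin d) : |(p i : ℝ)| ≤ rho p := by
  rw [← Real.sqrt_sq_eq_abs]
  apply Real.sqrt_le_sqrt
  have : (p i : ℝ) ^ 2 ≤ znsq p :=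
    Finset.single_le_sum (f := fun i => ((p i : ℝ)) ^ 2) (fun _ _ => sq_nonneg _)
      (Finset.mem_univ i)
  linarith

/-- Box of side `2N+1`. -/
noncomputable def box (d N : ℕ) : Finset (Fin d → ℤ) := Fintype.piFinset fun _ => Finset.Icc (-(N:ℤ)) (N:ℤ)

lemma card_box (N : ℕ) : (box d N).card = (2 * N + 1) ^ d := by
  rw [box, Fintype.card_piFinset]
  have : (Finset.Icc (-(N:ℤ)) (N:ℤ)).card = 2 * N + 1 := by
    rw [Int.card_Icc]
    omega
  simp [this]

lemma mem_box {p : Fin d → ℤ} {N : ℕ} (h : rho p ≤ (N : ℝ)) : p ∈ box d N := by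
  rw [box, Fintype.mem_piFinset]
  intro i
  rw [Finset.mem_Icc, ← abs_le]
  have h1 : |(p i : ℝ)| ≤ (N : ℝ) := (abs_coord_le p i).trans h
  rw [← Int.cast_abs] at h1
  exact_mod_cast h1

/-- Dyadic level of a lattice point. -/
noncomputable def lev (p : Fin d → ℤ) : ℕ := Nat.log 2 ⌊rho p⌋₊

lemma one_le_floor_rho (p : Fin d → ℤ) : 1 ≤ ⌊rho p⌋₊ :=
  Nat.le_floor (by exact_mod_cast one_le_rho p)

lemma lev_lb (p : Fin d → ℤ) : (2:ℝ) ^ lev p ≤ rho p := by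
  have h1 : 2 ^ lev p ≤ ⌊rho p⌋₊ :=
    Nat.pow_log_le_self 2 (by have := one_le_floor_rho p; omega)
  calc (2:ℝ) ^ lev p = ((2 ^ lev p : ℕ) : ℝ) := by push_cast; ring
    _ ≤ (⌊rho p⌋₊ : ℝ) := by exact_mod_cast h1
    _ ≤ rho p := Nat.floor_le (rho_nonneg p)

lemma lev_ub (p : Fin d → ℤ) : rho p < (2:ℝ) ^ (lev p + 1) := by
  have h1 : ⌊rho p⌋₊ < 2 ^ (lev p + 1) := Nat.lt_pow_succ_log_self (by norm_num) _
  have h2 : rho p < ⌊rho p⌋₊ + 1 := Nat.lt_floor_add_one _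
  have h3 : ((⌊rho p⌋₊ : ℝ) + 1) ≤ (2:ℝ) ^ (lev p + 1) := by
    have : ⌊rho p⌋₊ + 1 ≤ 2 ^ (lev p + 1) := h1
    exact_mod_cast this
  linarith


lemma rho_def (p : Fin d → ℤ) : rho p = Real.sqrt (1 + znsq p) := rfl

lemma tsum_shell_le (s : ℝ) (hs : 0 ≤ s) (j : ℕ) :
    ∑' p : Fin d → ℤ, (if lev p = j then ENNReal.ofReal (rho p ^ (-s)) else 0)
      ≤ ENNReal.ofReal ((8:ℝ) ^ d * (2:ℝ) ^ (((d:ℝ) - s) * (j:ℝ))) := by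
  set N : ℕ := 2 ^ (j + 1) with hN
  set c : ℝ := ((2:ℝ) ^ j) ^ (-s) with hc
  have hcnn : 0 ≤ c := Real.rpow_nonneg (by positivity) _
  have step1 : ∀ p : Fin d → ℤ,
      (if lev p = j then ENNReal.ofReal (rho p ^ (-s)) else 0)
        ≤ (if p ∈ box d N then ENNReal.ofReal c else 0) := by
    intro p
    by_cases h : lev p = j
    · have hub : rho p ≤ (N : ℝ) := by
        have := lev_ub p
        rw [h] at this
        push_cast [hN]
        linarith
      rw [if_pos h, if_pos (mem_box hub)]
      apply ENNReal.ofReal_le_ofReal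
      apply Real.rpow_le_rpow_of_nonpos (by positivity) _ (by linarith)
      have := lev_lb p; rw [h] at this; exact this
    · rw [if_neg h]; positivity
  calc ∑' p : Fin d → ℤ, (if lev p = j then ENNReal.ofReal (rho p ^ (-s)) else 0)
      ≤ ∑' p : Fin d → ℤ, (if p ∈ box d N then ENNReal.ofReal c else 0) :=
        ENNReal.tsum_le_tsum step1
    _ = ∑ p ∈ box d N, (if p ∈ box d N then ENNReal.ofReal c else 0) :=
        tsum_eq_sum (fun p hp => if_neg hp)
    _ = ((box d N).card : ℝ≥0∞) * ENNReal.ofReal c := by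
        rw [Finset.sum_ite_of_true (fun p hp => hp), Finset.sum_const, nsmul_eq_mul]
    _ ≤ ENNReal.ofReal ((8:ℝ) ^ d * (2:ℝ) ^ (((d:ℝ) - s) * (j:ℝ))) := by
        rw [← ENNReal.ofReal_natCast, ← ENNReal.ofReal_mul (by positivity)]
        apply ENNReal.ofReal_le_ofReal
        have hcard : ((box d N).card : ℝ) ≤ ((2:ℝ) ^ (j + 3)) ^ d := by
          rw [card_box]
          have hnat : 2 * N + 1 ≤ 2 ^ (j + 3) := by
            have h1 : (1:ℕ) ≤ 2 ^ j := Nat.one_le_two_pow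
            calc 2 * N + 1 = 2 ^ j * 4 + 1 := by rw [hN]; ring
              _ ≤ 2 ^ j * 8 := by omega
              _ = 2 ^ (j + 3) := by rw [pow_add]; ring
          rw [show (((2 * N + 1) ^ d : ℕ) : ℝ) = ((2 * N + 1 : ℕ) : ℝ) ^ d by push_cast; ring]
          apply pow_le_pow_left₀ (by positivity)
          exact_mod_cast hnat
        calc ((box d N).card : ℝ) * c ≤ ((2:ℝ) ^ (j + 3)) ^ d * c :=
              mul_le_mul_of_nonneg_right hcard hcnn
          _ = (8:ℝ) ^ d * (2:ℝ) ^ (((d:ℝ) - s) * (j:ℝ)) := by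
              rw [hc]
              rw [show ((2:ℝ) ^ (j + 3)) ^ d = 8 ^ d * ((2:ℝ) ^ j) ^ d by
                rw [pow_add, mul_pow, mul_comm]; norm_num]
              rw [mul_assoc]
              congr 1
              rw [← Real.rpow_natCast ((2:ℝ) ^ j) d, ← Real.rpow_natCast (2:ℝ) j,
                ← Real.rpow_mul (by norm_num), ← Real.rpow_mul (by norm_num),
                ← Real.rpow_add (by norm_num)]
              congr 1
              ring

/-- Constant for the ball sum. -/
noncomputable def CB (d : ℕ) (s : ℝ) : ℝ :=
  8 ^ d * (2:ℝ) ^ ((d:ℝ) - s) * ((2:ℝ) ^ ((d:ℝ) - s) - 1)⁻¹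

/-- Constant for the tail sum. -/
noncomputable def CT (d : ℕ) (s : ℝ) : ℝ :=
  8 ^ d * (2:ℝ) ^ (s - (d:ℝ)) * (1 - (2:ℝ) ^ ((d:ℝ) - s))⁻¹

lemma CB_pos {s : ℝ} (h : s < d) : 0 < CB d s := by
  have hq : 1 < (2:ℝ) ^ ((d:ℝ) - s) := by
    rw [Real.one_lt_rpow_iff_of_pos (by norm_num)]
    exact Or.inl ⟨by norm_num, by linarith⟩
  have : 0 < (2:ℝ) ^ ((d:ℝ) - s) - 1 := by linarith
  rw [CB]; positivity

lemma CT_pos {s : ℝ} (h : (d:ℝ) < s) : 0 < CT d s := by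
  have hq : (2:ℝ) ^ ((d:ℝ) - s) < 1 :=
    Real.rpow_lt_one_of_one_lt_of_neg (by norm_num) (by linarith)
  have : 0 < 1 - (2:ℝ) ^ ((d:ℝ) - s) := by linarith
  rw [CT]; positivity

lemma tsum_ball_le (s : ℝ) (hs0 : 0 < s) (hsd : s < d) (R : ℝ) (hR : 1 ≤ R) :
    ∑' p : Fin d → ℤ, (if rho p ≤ R then ENNReal.ofReal (rho p ^ (-s)) else 0)
      ≤ ENNReal.ofReal (CB d s * R ^ ((d:ℝ) - s)) := by
  have hR0 : 0 ≤ R := by linarith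
  set J : ℕ := Nat.log 2 ⌊R⌋₊ with hJ
  have hfl1 : 1 ≤ ⌊R⌋₊ := Nat.le_floor (by exact_mod_cast hR)
  have h2J : (2:ℝ) ^ J ≤ R := by
    have h1 : 2 ^ J ≤ ⌊R⌋₊ := Nat.pow_log_le_self 2 (by omega)
    calc (2:ℝ) ^ J = ((2 ^ J : ℕ) : ℝ) := by push_cast; ring
      _ ≤ (⌊R⌋₊ : ℝ) := by exact_mod_cast h1
      _ ≤ R := Nat.floor_le hR0
  have hj_le : ∀ j : ℕ, (2:ℝ) ^ j ≤ R → j ≤ J := by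
    intro j hj
    have h1 : (2:ℕ) ^ j ≤ ⌊R⌋₊ := Nat.le_floor (by exact_mod_cast hj)
    exact (Nat.le_log_iff_pow_le (by norm_num) (by omega)).mpr h1
  -- pointwise splitting into shells
  have step1 : ∀ p : Fin d → ℤ,
      (if rho p ≤ R then ENNReal.ofReal (rho p ^ (-s)) else 0)
        ≤ ∑' j : ℕ, (if lev p = j ∧ (2:ℝ) ^ j ≤ R then ENNReal.ofReal (rho p ^ (-s)) else 0) := by
    intro p
    by_cases h : rho p ≤ R
    · rw [if_pos h]
      have hcond : lev p = lev p ∧ (2:ℝ) ^ lev p ≤ R := ⟨rfl, (lev_lb p).trans h⟩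
      calc ENNReal.ofReal (rho p ^ (-s))
          = (if lev p = lev p ∧ (2:ℝ) ^ lev p ≤ R then ENNReal.ofReal (rho p ^ (-s)) else 0) :=
            (if_pos hcond).symm
        _ ≤ _ := ENNReal.le_tsum (lev p)
    · rw [if_neg h]; positivity
  calc ∑' p : Fin d → ℤ, (if rho p ≤ R then ENNReal.ofReal (rho p ^ (-s)) else 0)
      ≤ ∑' p : Fin d → ℤ, ∑' j : ℕ,
          (if lev p = j ∧ (2:ℝ) ^ j ≤ R then ENNReal.ofReal (rho p ^ (-s)) else 0) :=
        ENNReal.tsum_le_tsum step1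
    _ = ∑' j : ℕ, ∑' p : Fin d → ℤ,
          (if lev p = j ∧ (2:ℝ) ^ j ≤ R then ENNReal.ofReal (rho p ^ (-s)) else 0) :=
        ENNReal.tsum_comm
    _ ≤ ∑' j : ℕ, (if (2:ℝ) ^ j ≤ R then
          ENNReal.ofReal ((8:ℝ) ^ d * (2:ℝ) ^ (((d:ℝ) - s) * (j:ℝ))) else 0) := by
        apply ENNReal.tsum_le_tsum
        intro j
        by_cases hj : (2:ℝ) ^ j ≤ R
        · rw [if_pos hj]
          simp only [hj, and_true]
          exact tsum_shell_le s hs0.le j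
        · rw [if_neg hj]
          simp only [hj, and_false, if_false]
          simp
    _ = ∑ j ∈ Finset.range (J + 1), (if (2:ℝ) ^ j ≤ R then
          ENNReal.ofReal ((8:ℝ) ^ d * (2:ℝ) ^ (((d:ℝ) - s) * (j:ℝ))) else 0) := by
        apply tsum_eq_sum
        intro j hj
        rw [Finset.mem_range] at hj
        rw [if_neg]
        intro hcon
        exact hj (Nat.lt_succ_of_le (hj_le j hcon))
    _ ≤ ∑ j ∈ Finset.range (J + 1),
          ENNReal.ofReal ((8:ℝ) ^ d * (2:ℝ) ^ (((d:ℝ) - s) * (j:ℝ))) := by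
        apply Finset.sum_le_sum
        intro j _
        split
        · exact le_rfl
        · positivity
    _ = ENNReal.ofReal (∑ j ∈ Finset.range (J + 1),
          (8:ℝ) ^ d * (2:ℝ) ^ (((d:ℝ) - s) * (j:ℝ))) :=
        (ENNReal.ofReal_sum_of_nonneg (fun j _ => by positivity)).symm
    _ ≤ ENNReal.ofReal (CB d s * R ^ ((d:ℝ) - s)) := by
        apply ENNReal.ofReal_le_ofReal
        set q : ℝ := (2:ℝ) ^ ((d:ℝ) - s) with hq
        have hq1 : 1 < q := by
          rw [hq, Real.one_lt_rpow_iff_of_pos (by norm_num)]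
          exact Or.inl ⟨by norm_num, by linarith⟩
        have hq0 : 0 < q := by linarith
        have hqpow : ∀ j : ℕ, (2:ℝ) ^ (((d:ℝ) - s) * (j:ℝ)) = q ^ j := by
          intro j
          rw [hq, ← Real.rpow_natCast ((2:ℝ) ^ ((d:ℝ) - s)) j, ← Real.rpow_mul (by norm_num)]
        simp_rw [hqpow]
        rw [← Finset.mul_sum]
        have hgeom : ∑ j ∈ Finset.range (J + 1), q ^ j = (q ^ (J + 1) - 1) / (q - 1) :=
          geom_sum_eq (by linarith) _
        rw [hgeom]
        have hqJ : q ^ J ≤ R ^ ((d:ℝ) - s) := by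
          have : q ^ J = ((2:ℝ) ^ J) ^ ((d:ℝ) - s) := by
            rw [hq, ← Real.rpow_natCast ((2:ℝ) ^ ((d:ℝ) - s)) J, ← Real.rpow_mul (by norm_num),
              ← Real.rpow_natCast (2:ℝ) J, ← Real.rpow_mul (by norm_num), mul_comm]
          rw [this]
          exact Real.rpow_le_rpow (by positivity) h2J (by linarith)
        have hq1' : 0 < q - 1 := by linarith
        rw [CB, ← hq]
        calc (8:ℝ) ^ d * ((q ^ (J + 1) - 1) / (q - 1))
            ≤ (8:ℝ) ^ d * (q ^ (J + 1) / (q - 1)) := by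
              gcongr
              · linarith

          _ = (8:ℝ) ^ d * q * (q - 1)⁻¹ * q ^ J := by ring
          _ ≤ 8 ^ d * q * (q - 1)⁻¹ * R ^ ((d:ℝ) - s) := by
              apply mul_le_mul_of_nonneg_left hqJ (by positivity)

lemma geom_tail_le (a : ℝ≥0∞) (J : ℕ) :
    ∑' j : ℕ, (if J ≤ j then a ^ j else 0) ≤ a ^ J * (1 - a)⁻¹ := by
  have hrange : ∀ j : ℕ, (if J ≤ j then a ^ j else 0) ≠ 0 → j ∈ Set.range (fun i : ℕ => J + i) := by
    intro j hj
    by_cases h : J ≤ j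
    · exact ⟨j - J, by simp; omega⟩
    · simp [h] at hj
  have hinj : Function.Injective (fun i : ℕ => J + i) := fun a b h => by simp at h; omega
  have := hinj.tsum_eq (f := fun j : ℕ => if J ≤ j then a ^ j else 0)
    (by intro j hj; exact hrange j hj)
  rw [← this]
  have : ∀ i : ℕ, (if J ≤ J + i then a ^ (J + i) else 0) = a ^ J * a ^ i := by
    intro i
    rw [if_pos (Nat.le_add_right _ _), pow_add]
  simp_rw [this]
  rw [ENNReal.tsum_mul_left, ENNReal.tsum_geometric]

lemma tsum_tail_le (s : ℝ) (hsd : (d:ℝ) < s) (R : ℝ) (hR : 1 ≤ R) :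
    ∑' p : Fin d → ℤ, (if R ≤ rho p then ENNReal.ofReal (rho p ^ (-s)) else 0)
      ≤ ENNReal.ofReal (CT d s * R ^ ((d:ℝ) - s)) := by
  have hR0 : 0 < R := by linarith
  have hs0 : (0:ℝ) ≤ s := le_trans (Nat.cast_nonneg d) hsd.le
  set J : ℕ := Nat.log 2 ⌊R⌋₊ with hJ
  have hfl1 : 1 ≤ ⌊R⌋₊ := Nat.le_floor (by exact_mod_cast hR)
  have hRlt : R < (2:ℝ) ^ (J + 1) := by
    have h1 : ⌊R⌋₊ < 2 ^ (J + 1) := Nat.lt_pow_succ_log_self (by norm_num) _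
    have h2 : R < ⌊R⌋₊ + 1 := Nat.lt_floor_add_one _
    have h3 : ((⌊R⌋₊ : ℝ) + 1) ≤ (2:ℝ) ^ (J + 1) := by exact_mod_cast h1
    linarith
  have hR2J : R / 2 ≤ (2:ℝ) ^ J := by
    rw [pow_succ] at hRlt
    linarith
  have hlev : ∀ p : Fin d → ℤ, R ≤ rho p → J ≤ lev p := by
    intro p hp
    by_contra hcon
    push_neg at hcon
    have h1 : (2:ℝ) ^ (lev p + 1) ≤ (2:ℝ) ^ J :=
      pow_le_pow_right₀ (by norm_num) (by omega)
    have h2 : (2:ℝ) ^ J ≤ R := by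
      calc (2:ℝ) ^ J = ((2 ^ J : ℕ) : ℝ) := by push_cast; ring
        _ ≤ (⌊R⌋₊ : ℝ) := by exact_mod_cast Nat.pow_log_le_self 2 (by omega)
        _ ≤ R := Nat.floor_le hR0.le
    have := lev_ub p
    linarith
  have step1 : ∀ p : Fin d → ℤ,
      (if R ≤ rho p then ENNReal.ofReal (rho p ^ (-s)) else 0)
        ≤ ∑' j : ℕ, (if lev p = j ∧ J ≤ j then ENNReal.ofReal (rho p ^ (-s)) else 0) := by
    intro p
    by_cases h : R ≤ rho p
    · rw [if_pos h]
      calc ENNReal.ofReal (rho p ^ (-s))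
          = (if lev p = lev p ∧ J ≤ lev p then ENNReal.ofReal (rho p ^ (-s)) else 0) :=
            (if_pos ⟨rfl, hlev p h⟩).symm
        _ ≤ _ := ENNReal.le_tsum (lev p)
    · rw [if_neg h]; positivity
  set q : ℝ := (2:ℝ) ^ ((d:ℝ) - s) with hq
  have hq1 : q < 1 := Real.rpow_lt_one_of_one_lt_of_neg (by norm_num) (by linarith)
  have hq0 : 0 < q := Real.rpow_pos_of_pos (by norm_num) _
  have hqpow : ∀ j : ℕ, (2:ℝ) ^ (((d:ℝ) - s) * (j:ℝ)) = q ^ j := by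
    intro j
    rw [hq, ← Real.rpow_natCast ((2:ℝ) ^ ((d:ℝ) - s)) j, ← Real.rpow_mul (by norm_num)]
  calc ∑' p : Fin d → ℤ, (if R ≤ rho p then ENNReal.ofReal (rho p ^ (-s)) else 0)
      ≤ ∑' p : Fin d → ℤ, ∑' j : ℕ,
          (if lev p = j ∧ J ≤ j then ENNReal.ofReal (rho p ^ (-s)) else 0) :=
        ENNReal.tsum_le_tsum step1
    _ = ∑' j : ℕ, ∑' p : Fin d → ℤ,
          (if lev p = j ∧ J ≤ j then ENNReal.ofReal (rho p ^ (-s)) else 0) :=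
        ENNReal.tsum_comm
    _ ≤ ∑' j : ℕ, (if J ≤ j then
          ENNReal.ofReal ((8:ℝ) ^ d) * ENNReal.ofReal q ^ j else 0) := by
        apply ENNReal.tsum_le_tsum
        intro j
        by_cases hj : J ≤ j
        · rw [if_pos hj]
          simp only [hj, and_true]
          refine le_trans (tsum_shell_le s hs0 j) ?_
          rw [hqpow j, ENNReal.ofReal_mul (by positivity), ENNReal.ofReal_pow hq0.le]
        · rw [if_neg hj]
          simp only [hj, and_false, if_false]
          simp
    _ ≤ ENNReal.ofReal (CT d s * R ^ ((d:ℝ) - s)) := by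
        have : ∀ j : ℕ, (if J ≤ j then ENNReal.ofReal ((8:ℝ) ^ d) * ENNReal.ofReal q ^ j else 0)
            = ENNReal.ofReal ((8:ℝ) ^ d) * (if J ≤ j then ENNReal.ofReal q ^ j else 0) := by
          intro j; split <;> simp
        simp_rw [this]
        rw [ENNReal.tsum_mul_left]
        refine le_trans (mul_le_mul_right (geom_tail_le _ J) _) ?_
        have h1a : (1 : ℝ≥0∞) - ENNReal.ofReal q = ENNReal.ofReal (1 - q) := by
          rw [ENNReal.ofReal_sub _ hq0.le, ENNReal.ofReal_one]
        rw [h1a, ← ENNReal.ofReal_pow hq0.le,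
          (ENNReal.ofReal_inv_of_pos (by linarith : (0:ℝ) < 1 - q)).symm, ← ENNReal.ofReal_mul (by positivity),
          ← ENNReal.ofReal_mul (by positivity)]
        apply ENNReal.ofReal_le_ofReal
        have hqJ : q ^ J ≤ (2:ℝ) ^ (s - (d:ℝ)) * R ^ ((d:ℝ) - s) := by
          have he : q ^ J = ((2:ℝ) ^ J) ^ ((d:ℝ) - s) := by
            rw [hq, ← Real.rpow_natCast ((2:ℝ) ^ ((d:ℝ) - s)) J, ← Real.rpow_mul (by norm_num),
              ← Real.rpow_natCast (2:ℝ) J, ← Real.rpow_mul (by norm_num), mul_comm]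
          rw [he]
          calc ((2:ℝ) ^ J) ^ ((d:ℝ) - s) ≤ (R / 2) ^ ((d:ℝ) - s) :=
                Real.rpow_le_rpow_of_nonpos (by positivity) hR2J (by linarith)
            _ = (2:ℝ) ^ (s - (d:ℝ)) * R ^ ((d:ℝ) - s) := by
                rw [Real.div_rpow hR0.le (by norm_num), div_eq_mul_inv,
                  ← Real.rpow_neg (by norm_num : (0:ℝ) ≤ 2), mul_comm]
                congr 2
                ring
        calc (8:ℝ) ^ d * (q ^ J * (1 - q)⁻¹)
            ≤ (8:ℝ) ^ d * ((2:ℝ) ^ (s - (d:ℝ)) * R ^ ((d:ℝ) - s) * (1 - q)⁻¹) := by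
              apply mul_le_mul_of_nonneg_left _ (by positivity)
              apply mul_le_mul_of_nonneg_right hqJ (inv_nonneg.mpr (by linarith))
          _ = CT d s * R ^ ((d:ℝ) - s) := by rw [CT, ← hq]; ring


lemma jb_eq (p : Fin d → ℤ) (t : ℝ) : (1 + znsq p) ^ (-(t/2)) = rho p ^ (-t) := by
  have h0 : (0:ℝ) ≤ 1 + znsq p := by linarith [znsq_nonneg p]
  rw [rho_def, Real.sqrt_eq_rpow, ← Real.rpow_mul h0]
  congr 1
  ring


end JBConv

open JBConv

theorem japanese_bracket_convolution
    (d : ℕ) (hd : 1 ≤ d) (l m : ℝ)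
    (hl0 : 0 < l) (hld : l < d) (hm0 : 0 < m) (hmd : m < d) (hlm : (d : ℝ) < l + m) :
    ∃ C : ℝ, 0 < C ∧ ∀ k : Fin d → ℤ,
      ∑' k₁ : Fin d → ℤ,
        ENNReal.ofReal
          ((1 + znsq k₁) ^ (-(l / 2)) * (1 + znsq (k - k₁)) ^ (-(m / 2))) ≤
      ENNReal.ofReal (C * (1 + znsq k) ^ (-((l + m - d) / 2))) := by
  have hCBl := CB_pos (d := d) hld
  have hCBm := CB_pos (d := d) hmd
  have hCT := CT_pos (d := d) hlm
  set C : ℝ := (2:ℝ)^m * CB d l + (2:ℝ)^l * CB d m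
      + 2 * ((2:ℝ)^(l+m-(d:ℝ)) * CT d (l+m)) with hC
  have hCpos : 0 < C := by positivity
  refine ⟨C, hCpos, fun k => ?_⟩
  set K : ℝ := rho k with hK
  have hK1 : 1 ≤ K := one_le_rho k
  have hK0 : 0 < K := rho_pos k
  set Rk : ℝ := max (K/2) 1 with hRk
  set x : ℝ := -(l+m-(d:ℝ)) with hx
  -- triangle consequence
  have htri : ∀ p : Fin d → ℤ, K ≤ rho p + rho (k - p) := by
    intro p
    have hk : p + (k - p) = k := by abel
    calc K = rho (p + (k - p)) := by rw [hk]
      _ ≤ rho p + rho (k - p) := rho_triangle p (k - p)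
  -- the four majorant pieces
  set T1 : (Fin d → ℤ) → ℝ≥0∞ := fun p =>
    if rho p ≤ K then ENNReal.ofReal ((K/2) ^ (-m)) * ENNReal.ofReal (rho p ^ (-l)) else 0
    with hT1
  set T2 : (Fin d → ℤ) → ℝ≥0∞ := fun p =>
    if rho (k - p) ≤ K then ENNReal.ofReal ((K/2) ^ (-l)) * ENNReal.ofReal (rho (k-p) ^ (-m)) else 0
    with hT2
  set T3 : (Fin d → ℤ) → ℝ≥0∞ := fun p =>
    if Rk ≤ rho p then ENNReal.ofReal (rho p ^ (-(l+m))) else 0 with hT3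
  set T4 : (Fin d → ℤ) → ℝ≥0∞ := fun p =>
    if Rk ≤ rho (k - p) then ENNReal.ofReal (rho (k-p) ^ (-(l+m))) else 0 with hT4
  -- pointwise bound
  have hpt : ∀ p : Fin d → ℤ,
      ENNReal.ofReal (rho p ^ (-l)) * ENNReal.ofReal (rho (k-p) ^ (-m))
        ≤ T1 p + T2 p + T3 p + T4 p := by
    intro p
    rcases le_or_gt (rho p) (K/2) with h1 | h1
    · have hkp : K/2 ≤ rho (k - p) := by have := htri p; linarith
      have hbd : ENNReal.ofReal (rho p ^ (-l)) * ENNReal.ofReal (rho (k-p) ^ (-m)) ≤ T1 p := by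
        rw [hT1]
        simp only
        rw [if_pos (le_trans h1 (by linarith))]
        rw [mul_comm]
        refine mul_le_mul' (ENNReal.ofReal_le_ofReal ?_) le_rfl
        exact Real.rpow_le_rpow_of_nonpos (by positivity) hkp (by linarith)
      exact le_add_right (le_add_right (le_add_right hbd))
    · rcases le_or_gt (rho (k - p)) (K/2) with h2 | h2
      · have hbd : ENNReal.ofReal (rho p ^ (-l)) * ENNReal.ofReal (rho (k-p) ^ (-m)) ≤ T2 p := by
          rw [hT2]
          simp only
          rw [if_pos (le_trans h2 (by linarith))]
          refine mul_le_mul' (ENNReal.ofReal_le_ofReal ?_) le_rfl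
          exact Real.rpow_le_rpow_of_nonpos (by positivity) h1.le (by linarith)
        exact le_add_right (le_add_right (hbd.trans le_add_self))
      · rcases le_total (rho p) (rho (k - p)) with hc | hc
        · have hbd : ENNReal.ofReal (rho p ^ (-l)) * ENNReal.ofReal (rho (k-p) ^ (-m)) ≤ T3 p := by
            rw [hT3]
            simp only
            rw [if_pos (max_le h1.le (one_le_rho p))]
            calc ENNReal.ofReal (rho p ^ (-l)) * ENNReal.ofReal (rho (k-p) ^ (-m))
                ≤ ENNReal.ofReal (rho p ^ (-l)) * ENNReal.ofReal (rho p ^ (-m)) := by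
                  refine mul_le_mul' le_rfl (ENNReal.ofReal_le_ofReal ?_)
                  exact Real.rpow_le_rpow_of_nonpos (rho_pos p) hc (by linarith)
              _ = ENNReal.ofReal (rho p ^ (-(l+m))) := by
                  rw [← ENNReal.ofReal_mul (Real.rpow_nonneg (rho_nonneg p) _),
                    ← Real.rpow_add (rho_pos p), show -l + -m = -(l+m) by ring]
          exact le_add_right (hbd.trans le_add_self)
        · have hbd : ENNReal.ofReal (rho p ^ (-l)) * ENNReal.ofReal (rho (k-p) ^ (-m)) ≤ T4 p := by
            rw [hT4]
            simp only
            rw [if_pos (max_le h2.le (one_le_rho (k - p)))]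
            calc ENNReal.ofReal (rho p ^ (-l)) * ENNReal.ofReal (rho (k-p) ^ (-m))
                ≤ ENNReal.ofReal (rho (k-p) ^ (-l)) * ENNReal.ofReal (rho (k-p) ^ (-m)) := by
                  refine mul_le_mul' (ENNReal.ofReal_le_ofReal ?_) le_rfl
                  exact Real.rpow_le_rpow_of_nonpos (rho_pos (k-p)) hc (by linarith)
              _ = ENNReal.ofReal (rho (k-p) ^ (-(l+m))) := by
                  rw [← ENNReal.ofReal_mul (Real.rpow_nonneg (rho_nonneg _) _),
                    ← Real.rpow_add (rho_pos (k-p)), show -l + -m = -(l+m) by ring]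
          exact hbd.trans le_add_self
  -- sums of the pieces
  have hpow : ∀ s t : ℝ, 0 < s → (K/2) ^ (-s) * (K ^ t) = 2^s * K ^ (-s + t) := by
    intro s t hs
    rw [Real.div_rpow hK0.le (by norm_num), Real.rpow_neg (by norm_num : (0:ℝ) ≤ 2),
      div_eq_mul_inv, inv_inv, Real.rpow_add hK0]
    ring
  have hsum1 : ∑' p : Fin d → ℤ, T1 p ≤ ENNReal.ofReal ((2:ℝ)^m * CB d l * K ^ x) := by
    have hcongr : ∀ p : Fin d → ℤ, T1 p = ENNReal.ofReal ((K/2) ^ (-m)) *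
        (if rho p ≤ K then ENNReal.ofReal (rho p ^ (-l)) else 0) := by
      intro p; rw [hT1]; simp only; split <;> simp
    calc ∑' p : Fin d → ℤ, T1 p
        = ENNReal.ofReal ((K/2) ^ (-m)) *
          ∑' p : Fin d → ℤ, (if rho p ≤ K then ENNReal.ofReal (rho p ^ (-l)) else 0) := by
          rw [← ENNReal.tsum_mul_left]; exact tsum_congr hcongr
      _ ≤ ENNReal.ofReal ((K/2) ^ (-m)) * ENNReal.ofReal (CB d l * K ^ ((d:ℝ) - l)) :=
          mul_le_mul_right (tsum_ball_le l hl0 hld K hK1) _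
      _ = ENNReal.ofReal ((2:ℝ)^m * CB d l * K ^ x) := by
          rw [← ENNReal.ofReal_mul (by positivity)]
          congr 1
          have hh := hpow m ((d:ℝ) - l) hm0
          rw [show -m + ((d:ℝ) - l) = x by rw [hx]; ring] at hh
          calc (K/2) ^ (-m) * (CB d l * K ^ ((d:ℝ) - l))
              = CB d l * ((K/2) ^ (-m) * K ^ ((d:ℝ) - l)) := by ring
            _ = (2:ℝ)^m * CB d l * K ^ x := by rw [hh]; ring
  have hsum2 : ∑' p : Fin d → ℤ, T2 p ≤ ENNReal.ofReal ((2:ℝ)^l * CB d m * K ^ x) := by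
    have hre : ∑' p : Fin d → ℤ, T2 p = ∑' q : Fin d → ℤ,
        (if rho q ≤ K then ENNReal.ofReal ((K/2) ^ (-l)) * ENNReal.ofReal (rho q ^ (-m)) else 0) := by
      rw [← Equiv.tsum_eq (Equiv.subLeft k) (fun q =>
        (if rho q ≤ K then ENNReal.ofReal ((K/2) ^ (-l)) * ENNReal.ofReal (rho q ^ (-m)) else 0))]
      apply tsum_congr
      intro p
      rw [hT2]
      simp only [Equiv.subLeft_apply]
    rw [hre]
    have hcongr : ∀ q : Fin d → ℤ,
        (if rho q ≤ K then ENNReal.ofReal ((K/2) ^ (-l)) * ENNReal.ofReal (rho q ^ (-m)) else 0)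
        = ENNReal.ofReal ((K/2) ^ (-l)) *
          (if rho q ≤ K then ENNReal.ofReal (rho q ^ (-m)) else 0) := by
      intro q; split <;> simp
    calc ∑' q : Fin d → ℤ,
        (if rho q ≤ K then ENNReal.ofReal ((K/2) ^ (-l)) * ENNReal.ofReal (rho q ^ (-m)) else 0)
        = ENNReal.ofReal ((K/2) ^ (-l)) *
          ∑' q : Fin d → ℤ, (if rho q ≤ K then ENNReal.ofReal (rho q ^ (-m)) else 0) := by
          rw [← ENNReal.tsum_mul_left]; exact tsum_congr hcongr
      _ ≤ ENNReal.ofReal ((K/2) ^ (-l)) * ENNReal.ofReal (CB d m * K ^ ((d:ℝ) - m)) :=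
          mul_le_mul_right (tsum_ball_le m hm0 hmd K hK1) _
      _ = ENNReal.ofReal ((2:ℝ)^l * CB d m * K ^ x) := by
          rw [← ENNReal.ofReal_mul (by positivity)]
          congr 1
          have hh := hpow l ((d:ℝ) - m) hl0
          rw [show -l + ((d:ℝ) - m) = x by rw [hx]; ring] at hh
          calc (K/2) ^ (-l) * (CB d m * K ^ ((d:ℝ) - m))
              = CB d m * ((K/2) ^ (-l) * K ^ ((d:ℝ) - m)) := by ring
            _ = (2:ℝ)^l * CB d m * K ^ x := by rw [hh]; ring
  have htail_const : CT d (l+m) * Rk ^ ((d:ℝ) - (l+m))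
      ≤ (2:ℝ)^(l+m-(d:ℝ)) * CT d (l+m) * K ^ x := by
    have h1 : Rk ^ ((d:ℝ) - (l+m)) ≤ (K/2) ^ ((d:ℝ) - (l+m)) :=
      Real.rpow_le_rpow_of_nonpos (by positivity) (le_max_left _ _) (by linarith)
    have h2 : (K/2) ^ ((d:ℝ) - (l+m)) = (2:ℝ)^(l+m-(d:ℝ)) * K ^ x := by
      rw [Real.div_rpow hK0.le (by norm_num), div_eq_mul_inv,
        ← Real.rpow_neg (by norm_num : (0:ℝ) ≤ 2), hx]
      rw [show -((d:ℝ) - (l+m)) = l+m-(d:ℝ) by ring,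
        show ((d:ℝ) - (l+m)) = -(l+m-(d:ℝ)) by ring]
      ring
    calc CT d (l+m) * Rk ^ ((d:ℝ) - (l+m)) ≤ CT d (l+m) * (K/2) ^ ((d:ℝ) - (l+m)) :=
          mul_le_mul_of_nonneg_left h1 hCT.le
      _ = (2:ℝ)^(l+m-(d:ℝ)) * CT d (l+m) * K ^ x := by rw [h2]; ring
  have hsum3 : ∑' p : Fin d → ℤ, T3 p
      ≤ ENNReal.ofReal ((2:ℝ)^(l+m-(d:ℝ)) * CT d (l+m) * K ^ x) := by
    refine le_trans (tsum_tail_le (l+m) hlm Rk (le_max_right _ _)) ?_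
    exact ENNReal.ofReal_le_ofReal htail_const
  have hsum4 : ∑' p : Fin d → ℤ, T4 p
      ≤ ENNReal.ofReal ((2:ℝ)^(l+m-(d:ℝ)) * CT d (l+m) * K ^ x) := by
    have hre : ∑' p : Fin d → ℤ, T4 p = ∑' q : Fin d → ℤ,
        (if Rk ≤ rho q then ENNReal.ofReal (rho q ^ (-(l+m))) else 0) := by
      rw [← Equiv.tsum_eq (Equiv.subLeft k) (fun q =>
        (if Rk ≤ rho q then ENNReal.ofReal (rho q ^ (-(l+m))) else 0))]
      apply tsum_congr
      intro p
      rw [hT4]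
      simp only [Equiv.subLeft_apply]
    rw [hre]
    refine le_trans (tsum_tail_le (l+m) hlm Rk (le_max_right _ _)) ?_
    exact ENNReal.ofReal_le_ofReal htail_const
  -- assemble
  calc ∑' p : Fin d → ℤ,
      ENNReal.ofReal ((1 + znsq p) ^ (-(l / 2)) * (1 + znsq (k - p)) ^ (-(m / 2)))
      = ∑' p : Fin d → ℤ, ENNReal.ofReal (rho p ^ (-l)) * ENNReal.ofReal (rho (k-p) ^ (-m)) := by
        apply tsum_congr
        intro p
        rw [jb_eq p l, jb_eq (k - p) m,
          ENNReal.ofReal_mul (Real.rpow_nonneg (rho_nonneg p) _)]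
    _ ≤ ∑' p : Fin d → ℤ, (T1 p + T2 p + T3 p + T4 p) := ENNReal.tsum_le_tsum hpt
    _ = (∑' p, T1 p) + (∑' p, T2 p) + (∑' p, T3 p) + (∑' p, T4 p) := by
        rw [ENNReal.tsum_add, ENNReal.tsum_add, ENNReal.tsum_add]
    _ ≤ ENNReal.ofReal ((2:ℝ)^m * CB d l * K ^ x)
        + ENNReal.ofReal ((2:ℝ)^l * CB d m * K ^ x)
        + ENNReal.ofReal ((2:ℝ)^(l+m-(d:ℝ)) * CT d (l+m) * K ^ x)
        + ENNReal.ofReal ((2:ℝ)^(l+m-(d:ℝ)) * CT d (l+m) * K ^ x) :=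
        add_le_add (add_le_add (add_le_add hsum1 hsum2) hsum3) hsum4
    _ = ENNReal.ofReal (C * K ^ x) := by
        rw [← ENNReal.ofReal_add (by positivity) (by positivity),
          ← ENNReal.ofReal_add (by positivity) (by positivity),
          ← ENNReal.ofReal_add (by positivity) (by positivity)]
        congr 1
        rw [hC]
        ring
    _ = ENNReal.ofReal (C * (1 + znsq k) ^ (-((l + m - d) / 2))) := by
        rw [jb_eq k (l + m - (d:ℝ)), hx, hK]
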